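/- Let m be a natural number, 0 < Y_1 < ... < Y_m positive reals, c_1, ..., c_m real numbers, and let G1 : (0,∞) → ℝ be twice continuously differentiable. Define G(S) = G1(S) + Σ_{i=1}^m c_i·(Y_i − S)_+ for S > 0. Assume lim_{K→∞} G1(K) = 0, lim_{K→∞} K·G1'(K) = 0, and that for every S > 0 the function K ↦ (K − S)_+ · G1''(K) is Lebesgue integrable on (0,∞). Then for every S > 0: G(S) = Σ_{i=1}^m c_i·(Y_i − S)_+ + ∫_0^∞ (K − S)_+ · G1''(K) dK. (Theorem 2.1, put-like case: a payoff vanishing at infinity, whose second derivative measure is a finite atomic part plus an absolutely continuous part, is the superposition of put payoffs (K − S)_+ with respect to the measure dG'.) -/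

import Mathlib

open MeasureTheory Filter Set

/-- Theorem 2.1 (put-like case): a payoff vanishing at infinity, whose second derivative
measure is a finite atomic part plus an absolutely continuous part, is the superposition
of put payoffs `(K - S)_+` with respect to the measure `dG'`. -/
theorem stmt_0 (m : ℕ) (Y c : Fin m → ℝ)
    (hYpos : ∀ i, 0 < Y i) (hYmono : StrictMono Y)
    (G1 G1' G1'' : ℝ → ℝ)
    (hd1 : ∀ S ∈ Ioi (0:ℝ), HasDerivAt G1 (G1' S) S)
    (hd2 : ∀ S ∈ Ioi (0:ℝ), HasDerivAt G1' (G1'' S) S)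
    (hcont : ContinuousOn G1'' (Ioi 0))
    (hlim : Tendsto G1 atTop (nhds 0))
    (hlim' : Tendsto (fun K => K * G1' K) atTop (nhds 0))
    (hint : ∀ S ∈ Ioi (0:ℝ),
      IntegrableOn (fun K => max (K - S) 0 * G1'' K) (Ioi 0))
    (G : ℝ → ℝ)
    (hG : ∀ S ∈ Ioi (0:ℝ), G S = G1 S + ∑ i, c i * max (Y i - S) 0) :
    ∀ S ∈ Ioi (0:ℝ),
      G S = (∑ i, c i * max (Y i - S) 0)
        + ∫ K in Ioi (0:ℝ), max (K - S) 0 * G1'' K := by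
  intro S hS
  have hS0 : (0:ℝ) < S := hS
  -- G1' tends to 0 at infinity
  have hG1'0 : Tendsto G1' atTop (nhds 0) := by
    have h := hlim'.mul tendsto_inv_atTop_zero
    rw [zero_mul] at h
    apply h.congr'
    filter_upwards [eventually_gt_atTop (0:ℝ)] with x hx
    rw [mul_comm x (G1' x), mul_assoc, mul_inv_cancel₀ hx.ne', mul_one]
  -- integrability on Ioi S
  have hintS : IntegrableOn (fun K => (K - S) * G1'' K) (Ioi S) := by
    refine ((hint S hS).mono_set (Ioi_subset_Ioi hS0.le)).congr_fun ?_ measurableSet_Ioi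
    intro K hK
    simp [max_eq_left (sub_nonneg.mpr (le_of_lt (mem_Ioi.mp hK)))]
  -- FTC on [S, T]
  have key : ∀ T, S ≤ T → ∫ K in S..T, (K - S) * G1'' K
      = ((T - S) * G1' T - G1 T) - ((S - S) * G1' S - G1 S) := by
    intro T hT
    refine intervalIntegral.integral_eq_sub_of_hasDerivAt (f := fun K => (K - S) * G1' K - G1 K) ?_ ?_
    · intro K hK
      rw [uIcc_of_le hT] at hK
      have hKpos : 0 < K := lt_of_lt_of_le hS0 hK.1
      have h1 := hd1 K hKpos
      have h2 := hd2 K hKpos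
      have h3 : HasDerivAt (fun K => (K - S) * G1' K)
          (1 * G1' K + (K - S) * G1'' K) K :=
        ((hasDerivAt_id K).sub_const S).mul h2
      have e : (K - S) * G1'' K = 1 * G1' K + (K - S) * G1'' K - G1' K := by ring
      rw [e]
      exact h3.sub h1
    · refine ContinuousOn.intervalIntegrable ?_
      refine ContinuousOn.mul (by fun_prop) (hcont.mono ?_)
      rw [uIcc_of_le hT]
      intro x hx
      exact lt_of_lt_of_le hS0 hx.1
  have hTend1 : Tendsto (fun T => ∫ K in S..T, (K - S) * G1'' K) atTop
      (nhds (∫ K in Ioi S, (K - S) * G1'' K)) :=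
    intervalIntegral_tendsto_integral_Ioi S hintS tendsto_id
  have hTend2 : Tendsto (fun T => ((T - S) * G1' T - G1 T) - ((S - S) * G1' S - G1 S))
      atTop (nhds (G1 S)) := by
    have h1 : Tendsto (fun T => (T - S) * G1' T) atTop (nhds 0) := by
      have h := hlim'.sub (hG1'0.const_mul S)
      simp only [mul_zero, sub_zero] at h
      exact h.congr (fun x => by ring)
    simpa using (h1.sub hlim).sub_const ((S - S) * G1' S - G1 S)
  have hmain : ∫ K in Ioi S, (K - S) * G1'' K = G1 S := by
    refine tendsto_nhds_unique (hTend1.congr' ?_) hTend2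
    filter_upwards [eventually_ge_atTop S] with T hT
    exact key T hT
  -- reduce integral over Ioi 0 to Ioi S
  have hsplit : ∫ K in Ioi (0:ℝ), max (K - S) 0 * G1'' K
      = ∫ K in Ioi S, (K - S) * G1'' K := by
    rw [show (∫ K in Ioi (0:ℝ), max (K - S) 0 * G1'' K)
        = ∫ K in Ioi (0:ℝ), (Ioi S).indicator (fun K => (K - S) * G1'' K) K from ?_]
    · rw [setIntegral_indicator measurableSet_Ioi,
        Set.Ioi_inter_Ioi, max_eq_right hS0.le]
    · refine setIntegral_congr_fun measurableSet_Ioi ?_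
      intro K hK
      by_cases h : S < K
      · simp [indicator_of_mem (mem_Ioi.mpr h), max_eq_left (sub_nonneg.mpr h.le)]
      · push_neg at h
        simp [indicator_of_notMem (by simpa using not_lt.mpr h : K ∉ Ioi S),
          max_eq_right (sub_nonpos.mpr h)]
  rw [hG S hS, hsplit, hmain, add_comm]
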